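/- Let I be a finite set, n ≥ 2, m ≥ 1. Suppose for each user u ∈ {1,…,m} and position k ∈ {1,…,n+1} items are drawn independently with item at position k distributed according to a pmf p_k on I. Let ω_k := k^β/∑_{k'=2}^n (k')^β and define the empirical training target distribution p̂(y) := (1/m)∑_{u}∑_{k=2}^n ω_k 1[item_{u,k} = y]. Then with probability at least 0.99, TV(p̂, p_{n+1}) ≤ ∑_{k=2}^n ω_k·TV(p_k, p_{n+1}) + C·|I|·sqrt( log(|I|)·(∑_{k=2}^n ω_k²) / m ) for some absolute constant C. -/

import Mathlib

open MeasureTheory ProbabilityTheory Finset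

private lemma bdd_integrable {Ω : Type*} [MeasurableSpace Ω] {μ : Measure Ω}
    [IsFiniteMeasure μ] {f : Ω → ℝ} (hf : Measurable f) {B : ℝ} (h : ∀ ω, |f ω| ≤ B) :
    Integrable f μ :=
  (integrable_const B).mono' hf.aestronglyMeasurable
    (Filter.Eventually.of_forall fun ω => by simpa using h ω)

/-- Theorem 2 of the paper (generalized target-distribution bound).
There is an absolute constant `C > 0` such that: for any finite item set `I`,
`n ≥ 2`, `m ≥ 1` users whose items at positions `1,…,n+1` are drawn
independently with the item at position `k` distributed as the pmf `p k`,
the GenPAS empirical training target distribution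
`p̂(y) = (1/m)∑_u ∑_{k=2}^n ω_k 1[item_{u,k} = y]` with
`ω_k = k^β/∑_{k'=2}^n (k')^β` satisfies, with probability at least 0.99,
`TV(p̂, p_{n+1}) ≤ ∑_k ω_k TV(p_k, p_{n+1}) + C·|I|·sqrt(log|I|·(∑_k ω_k²)/m)`. -/
theorem genpas_target_distribution_bound :
    ∃ C : ℝ, 0 < C ∧
      ∀ (I : Type) [Fintype I] [DecidableEq I]
        [mI : MeasurableSpace I] [MeasurableSingletonClass I]
        (Ω : Type) [MeasurableSpace Ω]
        (μ : Measure Ω) [IsProbabilityMeasure μ]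
        (n m : ℕ), 2 ≤ n → 1 ≤ m →
      ∀ (β : ℝ) (item : Fin m → ℕ → Ω → I) (p : ℕ → I → ℝ),
        (∀ u k, Measurable (item u k)) →
        (∀ k ∈ Finset.Icc 1 (n + 1), (∀ y, 0 ≤ p k y) ∧ ∑ y, p k y = 1) →
        (∀ u : Fin m, ∀ k ∈ Finset.Icc 1 (n + 1), ∀ y : I,
          μ {ω | item u k ω = y} = ENNReal.ofReal (p k y)) →
        iIndepFun
          (fun uk : Fin m × {k : ℕ // k ∈ Finset.Icc 1 (n + 1)} =>
            fun ω => item uk.1 uk.2 ω) μ →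
        ENNReal.ofReal 0.99 ≤
          μ {ω |
            (1 / 2) * ∑ y : I,
              |((1 : ℝ) / m) * (∑ u : Fin m, ∑ k ∈ Finset.Icc 2 n,
                  ((k : ℝ) ^ β / ∑ k' ∈ Finset.Icc 2 n, (k' : ℝ) ^ β) *
                    (if item u k ω = y then (1 : ℝ) else 0))
                - p (n + 1) y| ≤
            (∑ k ∈ Finset.Icc 2 n,
              ((k : ℝ) ^ β / ∑ k' ∈ Finset.Icc 2 n, (k' : ℝ) ^ β) *
                ((1 / 2) * ∑ y : I, |p k y - p (n + 1) y|)) +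
            C * (Fintype.card I : ℝ) *
              Real.sqrt (Real.log (Fintype.card I) *
                (∑ k ∈ Finset.Icc 2 n,
                  ((k : ℝ) ^ β / ∑ k' ∈ Finset.Icc 2 n, (k' : ℝ) ^ β) ^ 2) / m)} := by
  refine ⟨5, by norm_num, ?_⟩
  intro I _ _ mI _ Ω _ μ _ n m hn hm β item p hmeas hpmf hdist hindep
  set S : ℝ := ∑ k' ∈ Finset.Icc 2 n, (k' : ℝ) ^ β with hS_def
  have h2mem : (2 : ℕ) ∈ Finset.Icc 2 n := Finset.mem_Icc.mpr ⟨le_refl 2, hn⟩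
  have hkcast : ∀ k ∈ Finset.Icc 2 n, (0 : ℝ) < (k : ℝ) := by
    intro k hk
    have h2 := (Finset.mem_Icc.mp hk).1
    have : 0 < k := by omega
    exact_mod_cast this
  have hS_pos : 0 < S := by
    rw [hS_def]
    refine Finset.sum_pos (fun k hk => ?_) ⟨2, h2mem⟩
    exact Real.rpow_pos_of_pos (hkcast k hk) β
  set w : ℕ → ℝ := fun k => (k : ℝ) ^ β / S with hw_def
  have hwapp : ∀ k : ℕ, (k : ℝ) ^ β / S = w k := fun _ => rfl
  simp only [hwapp]
  have hw_pos : ∀ k ∈ Finset.Icc 2 n, 0 < w k := by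
    intro k hk
    exact div_pos (Real.rpow_pos_of_pos (hkcast k hk) β) hS_pos
  have hw_sum : ∑ k ∈ Finset.Icc 2 n, w k = 1 := by
    simp only [hw_def]
    rw [← Finset.sum_div, ← hS_def, div_self hS_pos.ne']
  set W2 : ℝ := ∑ k ∈ Finset.Icc 2 n, w k ^ 2 with hW2_def
  have hW2_pos : 0 < W2 := by
    rw [hW2_def]
    exact Finset.sum_pos (fun k hk => pow_pos (hw_pos k hk) 2) ⟨2, h2mem⟩
  have hm_pos : (0 : ℝ) < m := by exact_mod_cast hm
  have hsub : ∀ k ∈ Finset.Icc 2 n, k ∈ Finset.Icc 1 (n + 1) := by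
    intro k hk
    rw [Finset.mem_Icc] at hk ⊢
    omega
  -- fold the goal
  set f : Fin m → ℕ → I → Ω → ℝ := fun u k y ω => if item u k ω = y then (1 : ℝ) else 0
    with hf_def
  have hfold : ∀ (u : Fin m) (k : ℕ) (y : I) (ω : Ω),
      (if item u k ω = y then (1 : ℝ) else 0) = f u k y ω := fun _ _ _ _ => rfl
  simp only [hfold]
  set phat : I → Ω → ℝ :=
    fun y ω => ((1 : ℝ) / m) * ∑ u : Fin m, ∑ k ∈ Finset.Icc 2 n, w k * f u k y ω
    with hphat_def
  have hfold2 : ∀ (y : I) (ω : Ω),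
      ((1 : ℝ) / m) * (∑ u : Fin m, ∑ k ∈ Finset.Icc 2 n, w k * f u k y ω) = phat y ω :=
    fun _ _ => rfl
  simp only [hfold2]
  rcases lt_or_ge (Fintype.card I) 2 with hcard | hcard
  · -- degenerate case: |I| ≤ 1, the inequality holds surely
    have hall : ∀ ω : Ω,
        1 / 2 * ∑ x : I, |phat x ω - p (n + 1) x| ≤
          ∑ x ∈ Finset.Icc 2 n, w x * (1 / 2 * ∑ y : I, |p x y - p (n + 1) y|) +
            5 * (Fintype.card I : ℝ) * Real.sqrt (Real.log (Fintype.card I) * W2 / m) := by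
      rcases (by omega : Fintype.card I = 0 ∨ Fintype.card I = 1) with h0 | h1
      · haveI : IsEmpty I := Fintype.card_eq_zero_iff.mp h0
        intro ω
        simp only [Finset.univ_eq_empty, Finset.sum_empty, mul_zero]
        refine add_nonneg (Finset.sum_nonneg fun k hk => ?_) (by positivity)
        simp
      · obtain ⟨y0, hy0⟩ := Fintype.card_eq_one_iff.mp h1
        have huniv : (Finset.univ : Finset I) = {y0} := by
          ext y; simp [hy0 y]
        have hp1 : p (n + 1) y0 = 1 := by
          have h := (hpmf (n + 1) (by rw [Finset.mem_Icc]; omega)).2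
          rwa [huniv, Finset.sum_singleton] at h
        intro ω
        have hphat1 : phat y0 ω = 1 := by
          have hfo : ∀ (u : Fin m) (k : ℕ), f u k y0 ω = 1 := by
            intro u k; simp [hf_def, hy0 (item u k ω)]
          simp only [hphat_def, hfo, mul_one, hw_sum, Finset.sum_const, Finset.card_univ,
            Fintype.card_fin, nsmul_eq_mul, mul_one]
          field_simp
        simp only [huniv, Finset.sum_singleton, hphat1, hp1, sub_self, abs_zero, mul_zero]
        refine add_nonneg (Finset.sum_nonneg fun k hk => ?_) (by positivity)
        exact mul_nonneg (hw_pos k hk).le (by positivity)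
    have hset : {ω : Ω |
        1 / 2 * ∑ x : I, |phat x ω - p (n + 1) x| ≤
          ∑ x ∈ Finset.Icc 2 n, w x * (1 / 2 * ∑ y : I, |p x y - p (n + 1) y|) +
            5 * (Fintype.card I : ℝ) * Real.sqrt (Real.log (Fintype.card I) * W2 / m)} =
        Set.univ := Set.eq_univ_of_forall hall
    rw [hset, measure_univ]
    exact ENNReal.ofReal_le_one.mpr (by norm_num)
  · -- main case: |I| ≥ 2
    set q : I → ℝ := fun y => ∑ k ∈ Finset.Icc 2 n, w k * p k y with hq_def
    set g : Ω → ℝ := fun ω => ∑ y : I, (phat y ω - q y) ^ 2 with hg_def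
    set t : ℝ := 100 * (W2 / m) with ht_def
    have hfmeas : ∀ (u : Fin m) (k : ℕ) (y : I), Measurable (f u k y) := by
      intro u k y
      exact Measurable.ite ((hmeas u k) (measurableSet_singleton y)) measurable_const
        measurable_const
    have hphat_meas : ∀ y : I, Measurable (phat y) := by
      intro y
      simp only [hphat_def]
      exact (Finset.measurable_sum _ fun u _ =>
        Finset.measurable_sum _ fun k _ => (hfmeas u k y).const_mul _).const_mul _
    have hg_meas : Measurable g := by
      simp only [hg_def]
      exact Finset.measurable_sum _ fun y _ =>
        ((hphat_meas y).sub measurable_const).pow_const 2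
    have hf_int : ∀ (u : Fin m) (k : ℕ) (y : I), Integrable (f u k y) μ := by
      intro u k y
      refine bdd_integrable (hfmeas u k y) (B := 1) fun ω => ?_
      simp only [hf_def]
      split <;> norm_num
    have hf_mean : ∀ (u : Fin m) (k : ℕ), k ∈ Finset.Icc 1 (n + 1) → ∀ y : I,
        ∫ ω, f u k y ω ∂μ = p k y := by
      intro u k hk y
      have hind : f u k y = Set.indicator (item u k ⁻¹' {y}) (fun _ => (1 : ℝ)) := by
        funext ω
        by_cases h : item u k ω = y <;>
          simp [hf_def, Set.indicator_apply, Set.mem_preimage, Set.mem_singleton_iff, h]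
      rw [hind, integral_indicator_const (1 : ℝ) ((hmeas u k) (measurableSet_singleton y))]
      have hpre : item u k ⁻¹' {y} = {ω | item u k ω = y} := rfl
      rw [hpre, measureReal_def, hdist u k hk y, smul_eq_mul, mul_one, ENNReal.toReal_ofReal ((hpmf k hk).1 y)]
    have hcent_int : ∀ (u : Fin m) (k : ℕ) (y : I),
        Integrable (fun ω => f u k y ω - p k y) μ := fun u k y =>
      (hf_int u k y).sub (integrable_const _)
    have hcent_meas : ∀ (u : Fin m) (k : ℕ) (y : I),
        Measurable (fun ω => f u k y ω - p k y) := fun u k y =>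
      (hfmeas u k y).sub measurable_const
    have hcent_mean : ∀ (u : Fin m) (k : ℕ), k ∈ Finset.Icc 1 (n + 1) → ∀ y : I,
        ∫ ω, (f u k y ω - p k y) ∂μ = 0 := by
      intro u k hk y
      rw [integral_sub (hf_int u k y) (integrable_const _), hf_mean u k hk y, integral_const]
      simp
    have hcent_sq : ∀ (u : Fin m) (k : ℕ), k ∈ Finset.Icc 1 (n + 1) → ∀ y : I,
        ∫ ω, (f u k y ω - p k y) ^ 2 ∂μ = p k y - p k y ^ 2 := by
      intro u k hk y
      have hsq : (fun ω => (f u k y ω - p k y) ^ 2) =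
          fun ω => (1 - 2 * p k y) * f u k y ω + p k y ^ 2 := by
        funext ω
        simp only [hf_def]
        by_cases h : item u k ω = y <;> simp [h] <;> ring
      rw [hsq, integral_add ((hf_int u k y).const_mul _) (integrable_const _),
        integral_const_mul, hf_mean u k hk y, integral_const]
      simp only [probReal_univ, measure_univ, ENNReal.toReal_one, smul_eq_mul, one_mul]
      ring
    have hφmeas : ∀ (y : I) (c : ℝ),
        Measurable (fun x : I => (if x = y then (1 : ℝ) else 0) - c) :=
      fun y c => Measurable.of_discrete
    have hcent_indep : ∀ (u u' : Fin m) (k k' : ℕ) (hk : k ∈ Finset.Icc 1 (n + 1))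
        (hk' : k' ∈ Finset.Icc 1 (n + 1)), (u, k) ≠ (u', k') → ∀ y : I,
        IndepFun (fun ω => f u k y ω - p k y) (fun ω => f u' k' y ω - p k' y) μ := by
      intro u u' k k' hk hk' hne y
      have hij : ((u, ⟨k, hk⟩) : Fin m × {k : ℕ // k ∈ Finset.Icc 1 (n + 1)}) ≠
          (u', ⟨k', hk'⟩) := by
        intro h
        apply hne
        rw [Prod.ext_iff] at h ⊢
        exact ⟨h.1, congrArg Subtype.val h.2⟩
      exact (hindep.indepFun hij).comp (hφmeas y (p k y)) (hφmeas y (p k' y))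
    have hprod_int : ∀ (u u' : Fin m) (k k' : ℕ) (y : I),
        Integrable (fun ω => (f u k y ω - p k y) * (f u' k' y ω - p k' y)) μ := by
      intro u u' k k' y
      refine bdd_integrable ((hcent_meas u k y).mul (hcent_meas u' k' y))
        (B := (1 + |p k y|) * (1 + |p k' y|)) fun ω => ?_
      rw [abs_mul]
      have h1 : ∀ (v : Fin m) (j : ℕ), |f v j y ω - p j y| ≤ 1 + |p j y| := by
        intro v j
        have h2 : |f v j y ω| ≤ 1 := by simp only [hf_def]; split <;> norm_num
        have h3 := abs_sub (f v j y ω) (p j y)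
        linarith
      exact mul_le_mul (h1 u k) (h1 u' k') (abs_nonneg _) (by positivity)
    have hcross : ∀ (u u' : Fin m) (k k' : ℕ) (hk : k ∈ Finset.Icc 1 (n + 1))
        (hk' : k' ∈ Finset.Icc 1 (n + 1)), (u, k) ≠ (u', k') → ∀ y : I,
        ∫ ω, (f u k y ω - p k y) * (f u' k' y ω - p k' y) ∂μ = 0 := by
      intro u u' k k' hk hk' hne y
      rw [(hcent_indep u u' k k' hk hk' hne y).integral_fun_mul_eq_mul_integral
        (hcent_meas u k y).aestronglyMeasurable (hcent_meas u' k' y).aestronglyMeasurable,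
        hcent_mean u k hk y, zero_mul]
    have hA2 : ∀ a : Fin m × ℕ, a ∈ (Finset.univ : Finset (Fin m)) ×ˢ Finset.Icc 2 n →
        a.2 ∈ Finset.Icc 1 (n + 1) := fun a ha => hsub a.2 (Finset.mem_product.mp ha).2
    have hdev : ∀ (y : I) (ω : Ω), phat y ω - q y =
        ((1 : ℝ) / m) * ∑ a ∈ (Finset.univ : Finset (Fin m)) ×ˢ Finset.Icc 2 n,
          w a.2 * (f a.1 a.2 y ω - p a.2 y) := by
      intro y ω
      rw [Finset.sum_product]
      simp only [mul_sub, Finset.sum_sub_distrib, Finset.sum_const, Finset.card_univ,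
        Fintype.card_fin, nsmul_eq_mul]
      simp only [hphat_def, hq_def]
      field_simp
    have hkey : ∀ y : I, Integrable (fun ω => (phat y ω - q y) ^ 2) μ ∧
        ∫ ω, (phat y ω - q y) ^ 2 ∂μ =
          ((1 : ℝ) / m) * ∑ k ∈ Finset.Icc 2 n, w k ^ 2 * (p k y - p k y ^ 2) := by
      intro y
      have hexp : (fun ω => (phat y ω - q y) ^ 2) = fun ω =>
          ((1 : ℝ) / m) ^ 2 * ∑ a ∈ (Finset.univ : Finset (Fin m)) ×ˢ Finset.Icc 2 n,
            ∑ b ∈ (Finset.univ : Finset (Fin m)) ×ˢ Finset.Icc 2 n,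
            (w a.2 * (f a.1 a.2 y ω - p a.2 y)) * (w b.2 * (f b.1 b.2 y ω - p b.2 y)) := by
        funext ω
        rw [hdev y ω, mul_pow, pow_two (∑ a ∈ (Finset.univ : Finset (Fin m)) ×ˢ Finset.Icc 2 n,
          w a.2 * (f a.1 a.2 y ω - p a.2 y)), Finset.sum_mul_sum]
      have hint_ab : ∀ a b : Fin m × ℕ, Integrable
          (fun ω => (w a.2 * (f a.1 a.2 y ω - p a.2 y)) *
            (w b.2 * (f b.1 b.2 y ω - p b.2 y))) μ := by
        intro a b
        have hrw : (fun ω => (w a.2 * (f a.1 a.2 y ω - p a.2 y)) *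
            (w b.2 * (f b.1 b.2 y ω - p b.2 y)))
            = fun ω => (w a.2 * w b.2) *
              ((f a.1 a.2 y ω - p a.2 y) * (f b.1 b.2 y ω - p b.2 y)) := by
          funext ω; ring
        rw [hrw]
        exact (hprod_int a.1 b.1 a.2 b.2 y).const_mul _
      constructor
      · rw [hexp]
        exact (integrable_finset_sum _ fun a _ =>
          integrable_finset_sum _ fun b _ => hint_ab a b).const_mul _
      rw [hexp, integral_const_mul, integral_finset_sum _ fun a _ =>
        integrable_finset_sum _ fun b _ => hint_ab a b]
      have hterm : ∀ a ∈ (Finset.univ : Finset (Fin m)) ×ˢ Finset.Icc 2 n,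
          ∫ ω, (∑ b ∈ (Finset.univ : Finset (Fin m)) ×ˢ Finset.Icc 2 n,
            (w a.2 * (f a.1 a.2 y ω - p a.2 y)) * (w b.2 * (f b.1 b.2 y ω - p b.2 y))) ∂μ
            = w a.2 ^ 2 * (p a.2 y - p a.2 y ^ 2) := by
        intro a ha
        rw [integral_finset_sum _ fun b _ => hint_ab a b]
        have hoff : ∀ b ∈ (Finset.univ : Finset (Fin m)) ×ˢ Finset.Icc 2 n, b ≠ a →
            ∫ ω, (w a.2 * (f a.1 a.2 y ω - p a.2 y)) *
              (w b.2 * (f b.1 b.2 y ω - p b.2 y)) ∂μ = 0 := by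
          intro b hb hba
          have hrw : (fun ω => (w a.2 * (f a.1 a.2 y ω - p a.2 y)) *
              (w b.2 * (f b.1 b.2 y ω - p b.2 y))) =
              fun ω => (w a.2 * w b.2) *
                ((f a.1 a.2 y ω - p a.2 y) * (f b.1 b.2 y ω - p b.2 y)) := by
            funext ω; ring
          have hne : (a.1, a.2) ≠ (b.1, b.2) := by
            intro h
            exact hba (Prod.ext (congrArg Prod.fst h) (congrArg Prod.snd h)).symm
          rw [hrw, integral_const_mul, hcross a.1 b.1 a.2 b.2 (hA2 a ha) (hA2 b hb) hne y,
            mul_zero]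
        rw [Finset.sum_eq_single_of_mem a ha hoff]
        have hrw : (fun ω => (w a.2 * (f a.1 a.2 y ω - p a.2 y)) *
            (w a.2 * (f a.1 a.2 y ω - p a.2 y))) =
            fun ω => w a.2 ^ 2 * (f a.1 a.2 y ω - p a.2 y) ^ 2 := by
          funext ω; ring
        rw [hrw, integral_const_mul, hcent_sq a.1 a.2 (hA2 a ha) y]
      rw [Finset.sum_congr rfl hterm, Finset.sum_product]
      simp only [Finset.sum_const, Finset.card_univ, Fintype.card_fin, nsmul_eq_mul]
      field_simp
    have hg_int : Integrable g μ := by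
      simp only [hg_def]
      exact integrable_finset_sum _ fun y _ => (hkey y).1
    have hg_nonneg : 0 ≤ᵐ[μ] g := Filter.Eventually.of_forall fun ω => by
      simp only [hg_def, Pi.zero_apply]
      exact Finset.sum_nonneg fun y _ => sq_nonneg _
    have hgint_le : ∫ ω, g ω ∂μ ≤ W2 / m := by
      have h1 : ∫ ω, g ω ∂μ = ∑ y : I, ((1 : ℝ) / m) *
          ∑ k ∈ Finset.Icc 2 n, w k ^ 2 * (p k y - p k y ^ 2) := by
        simp only [hg_def]
        rw [integral_finset_sum _ fun y _ => (hkey y).1]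
        exact Finset.sum_congr rfl fun y _ => (hkey y).2
      rw [h1, ← Finset.mul_sum, Finset.sum_comm]
      have h2 : ∀ k ∈ Finset.Icc 2 n, ∑ y : I, w k ^ 2 * (p k y - p k y ^ 2) ≤ w k ^ 2 := by
        intro k hk
        rw [← Finset.mul_sum]
        have h3 : ∑ y : I, (p k y - p k y ^ 2) ≤ 1 := by
          rw [Finset.sum_sub_distrib, (hpmf k (hsub k hk)).2]
          have h4 : (0 : ℝ) ≤ ∑ y : I, p k y ^ 2 := Finset.sum_nonneg fun y _ => sq_nonneg _
          linarith
        calc w k ^ 2 * ∑ y : I, (p k y - p k y ^ 2) ≤ w k ^ 2 * 1 :=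
              mul_le_mul_of_nonneg_left h3 (sq_nonneg _)
          _ = w k ^ 2 := mul_one _
      calc ((1 : ℝ) / m) * ∑ k ∈ Finset.Icc 2 n, ∑ y : I, w k ^ 2 * (p k y - p k y ^ 2)
          ≤ ((1 : ℝ) / m) * ∑ k ∈ Finset.Icc 2 n, w k ^ 2 :=
            mul_le_mul_of_nonneg_left (Finset.sum_le_sum h2) (by positivity)
        _ = W2 / m := by rw [← hW2_def]; ring
    have hmark := mul_meas_ge_le_integral_of_nonneg hg_nonneg hg_int t
    have hWm_pos : 0 < W2 / m := div_pos hW2_pos hm_pos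
    have h1 : (μ {ω | t ≤ g ω}).toReal ≤ 1 / 100 := by
      have h2 : t * (μ {ω | t ≤ g ω}).toReal ≤ W2 / m := le_trans hmark hgint_le
      rw [ht_def] at h2
      nlinarith [ENNReal.toReal_nonneg (a := μ {ω | t ≤ g ω})]
    have h3 : μ {ω | t ≤ g ω} ≤ ENNReal.ofReal (1 / 100) := by
      rw [← ENNReal.ofReal_toReal (measure_ne_top μ {ω | t ≤ g ω})]
      exact ENNReal.ofReal_le_ofReal h1
    have h4 : ENNReal.ofReal 0.99 ≤ μ {ω | g ω < t} := by
      have hc : {ω | g ω < t} = {ω | t ≤ g ω}ᶜ := by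
        ext ω; simp [not_le]
      rw [hc, measure_compl (measurableSet_le measurable_const hg_meas)
        (measure_ne_top μ _), measure_univ]
      calc ENNReal.ofReal 0.99 = 1 - ENNReal.ofReal (1 / 100) := by
            rw [← ENNReal.ofReal_one, ← ENNReal.ofReal_sub _ (by norm_num)]
            norm_num
        _ ≤ 1 - μ {ω | t ≤ g ω} := tsub_le_tsub_left h3 1
    refine le_trans h4 (measure_mono ?_)
    intro ω hω
    simp only [Set.mem_setOf_eq] at hω ⊢
    have hc2 : (2 : ℝ) ≤ (Fintype.card I : ℝ) := by exact_mod_cast hcard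
    set c : ℝ := (Fintype.card I : ℝ) with hc_def
    have tri : ∀ y : I, |phat y ω - p (n + 1) y| ≤ |q y - p (n + 1) y| + |phat y ω - q y| := by
      intro y
      have h := abs_add_le (q y - p (n + 1) y) (phat y ω - q y)
      have he : q y - p (n + 1) y + (phat y ω - q y) = phat y ω - p (n + 1) y := by ring
      rwa [he] at h
    have bias : ∀ y : I, |q y - p (n + 1) y| ≤
        ∑ k ∈ Finset.Icc 2 n, w k * |p k y - p (n + 1) y| := by
      intro y
      have heq : q y - p (n + 1) y = ∑ k ∈ Finset.Icc 2 n, w k * (p k y - p (n + 1) y) := by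
        simp only [hq_def, mul_sub]
        rw [Finset.sum_sub_distrib, ← Finset.sum_mul, hw_sum, one_mul]
      rw [heq]
      refine (Finset.abs_sum_le_sum_abs _ _).trans (Finset.sum_le_sum fun k hk => ?_)
      rw [abs_mul, abs_of_nonneg (hw_pos k hk).le]
    have biasS : (1 / 2 : ℝ) * ∑ y : I, |q y - p (n + 1) y| ≤
        ∑ k ∈ Finset.Icc 2 n, w k * ((1 / 2) * ∑ y : I, |p k y - p (n + 1) y|) := by
      calc (1 / 2 : ℝ) * ∑ y : I, |q y - p (n + 1) y|
          ≤ (1 / 2) * ∑ y : I, ∑ k ∈ Finset.Icc 2 n, w k * |p k y - p (n + 1) y| :=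
            mul_le_mul_of_nonneg_left (Finset.sum_le_sum fun y _ => bias y) (by norm_num)
        _ = ∑ k ∈ Finset.Icc 2 n, w k * ((1 / 2) * ∑ y : I, |p k y - p (n + 1) y|) := by
            rw [Finset.sum_comm, Finset.mul_sum]
            exact Finset.sum_congr rfl fun k _ => by rw [← Finset.mul_sum]; ring
    have cs : (∑ y : I, |phat y ω - q y|) ^ 2 ≤ c * g ω := by
      have h := Finset.sum_mul_sq_le_sq_mul_sq Finset.univ (fun _ : I => (1 : ℝ))
        (fun y => |phat y ω - q y|)
      simp only [one_mul, one_pow, Finset.sum_const, Finset.card_univ, nsmul_eq_mul, mul_one,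
        sq_abs] at h
      simpa [hg_def, hc_def] using h
    have s1 : ∑ y : I, |phat y ω - q y| ≤ Real.sqrt (c * t) := by
      apply Real.le_sqrt_of_sq_le
      calc (∑ y : I, |phat y ω - q y|) ^ 2 ≤ c * g ω := cs
        _ ≤ c * t := mul_le_mul_of_nonneg_left hω.le (by linarith)
    have hlogc : Real.log 2 ≤ Real.log c := Real.log_le_log (by norm_num) hc2
    have hlog2 : (0.6931471803 : ℝ) < Real.log 2 := Real.log_two_gt_d9
    have s2 : Real.sqrt (c * t) = 10 * (Real.sqrt c * Real.sqrt (W2 / m)) := by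
      rw [ht_def, show c * (100 * (W2 / m)) = 100 * (c * (W2 / m)) by ring,
        Real.sqrt_mul (by norm_num : (0 : ℝ) ≤ 100), Real.sqrt_mul (by linarith : (0 : ℝ) ≤ c),
        show (100 : ℝ) = 10 ^ 2 by norm_num, Real.sqrt_sq (by norm_num : (0 : ℝ) ≤ 10)]
    have s3 : Real.sqrt c ≤ c * Real.sqrt (Real.log c) := by
      have hr1 : c * Real.sqrt (Real.log c) = Real.sqrt (c ^ 2 * Real.log c) := by
        rw [Real.sqrt_mul (sq_nonneg c), Real.sqrt_sq (by linarith)]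
      rw [hr1]
      apply Real.sqrt_le_sqrt
      have h5 : (2 : ℝ) * 0.6931471803 ≤ c * Real.log c :=
        mul_le_mul hc2 (by linarith) (by norm_num) (by linarith)
      calc c = c * 1 := (mul_one c).symm
        _ ≤ c * (c * Real.log c) := mul_le_mul_of_nonneg_left (by linarith) (by linarith)
        _ = c ^ 2 * Real.log c := by ring
    have s4 : Real.sqrt (Real.log c * W2 / m) = Real.sqrt (Real.log c) * Real.sqrt (W2 / m) := by
      rw [show Real.log c * W2 / m = Real.log c * (W2 / m) by ring,
        Real.sqrt_mul (by linarith : (0 : ℝ) ≤ Real.log c)]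
    have varS : (1 / 2 : ℝ) * ∑ y : I, |phat y ω - q y| ≤
        5 * c * Real.sqrt (Real.log c * W2 / m) := by
      have hs := Real.sqrt_nonneg (W2 / m)
      calc (1 / 2 : ℝ) * ∑ y : I, |phat y ω - q y| ≤ (1 / 2) * Real.sqrt (c * t) :=
            mul_le_mul_of_nonneg_left s1 (by norm_num)
        _ = 5 * (Real.sqrt c * Real.sqrt (W2 / m)) := by rw [s2]; ring
        _ ≤ 5 * (c * Real.sqrt (Real.log c) * Real.sqrt (W2 / m)) :=
            mul_le_mul_of_nonneg_left (mul_le_mul_of_nonneg_right s3 hs) (by norm_num)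
        _ = 5 * c * Real.sqrt (Real.log c * W2 / m) := by rw [s4]; ring
    calc (1 / 2 : ℝ) * ∑ y : I, |phat y ω - p (n + 1) y|
        ≤ (1 / 2) * ∑ y : I, (|q y - p (n + 1) y| + |phat y ω - q y|) :=
          mul_le_mul_of_nonneg_left (Finset.sum_le_sum fun y _ => tri y) (by norm_num)
      _ = (1 / 2) * ∑ y : I, |q y - p (n + 1) y| + (1 / 2) * ∑ y : I, |phat y ω - q y| := by
          rw [Finset.sum_add_distrib]; ring
      _ ≤ _ := add_le_add biasS varS
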